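/- Let I be a composition of n and let h be a central element of the Hecke algebra H(S_I) of the Young subgroup S_I ⊆ S_n. Then the normalized element N_I(h) = Σ_w T_w · h · T_{w⁻¹}, the sum running over the minimal-length coset representatives w of S_n/S_I, is central in the Hecke algebra H_n. -/

import Mathlib

open scoped BigOperators
open Finset

namespace HeckePaper

noncomputable section

/-- The Coxeter length of a permutation of `Fin n`, i.e. its number of inversions. -/
def len {n : ℕ} (w : Equiv.Perm (Fin n)) : ℕ :=
  (Finset.univ.filter fun p : Fin n × Fin n => p.1 < p.2 ∧ w p.2 < w p.1).card

/-- The adjacent transposition exchanging `i` and `i+1` (`0`-based), i.e. the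
Coxeter generator `s_{i+1} = T_{i+1}` in the (1-based) notation of the paper;
defined to be `1` when out of range. -/
def adj (n i : ℕ) : Equiv.Perm (Fin n) :=
  if h : i + 1 < n then Equiv.swap ⟨i, by omega⟩ ⟨i + 1, h⟩ else 1

/-- The q-integer `[k] = (q^k - q^{-k})/(q - q⁻¹) = q^{k-1} + q^{k-3} + ⋯ + q^{1-k}`. -/
def qint {R : Type} [CommRing R] (q : Rˣ) (k : ℤ) : R :=
  if 0 ≤ k then ∑ j ∈ Finset.range k.toNat, ((q ^ (k - 1 - 2 * (j : ℤ)) : Rˣ) : R)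
  else - ∑ j ∈ Finset.range (-k).toNat, ((q ^ (-k - 1 - 2 * (j : ℤ)) : Rˣ) : R)

/-- `Q = q - q⁻¹`. -/
def Qv (R : Type) [CommRing R] (q : Rˣ) : R := (q : R) - ((q⁻¹ : Rˣ) : R)

/-- A realization of the Hecke algebra `H_n` of the symmetric group `S_n` over `R`:
an `R`-algebra `H` with a basis `{T_w : w ∈ S_n}` such that `T_u T_v = T_{uv}`
whenever lengths add, and the Hecke quadratic relations
`T_i² = (q - q⁻¹) T_i + 1` hold for the generators. -/
structure HeckeAlgebra (n : ℕ) (R : Type) [CommRing R] (q : Rˣ) (H : Type)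
    [Ring H] [Algebra R H] where
  T : Equiv.Perm (Fin n) → H
  basis : Module.Basis (Equiv.Perm (Fin n)) R H
  basis_eq : ∀ w, basis w = T w
  T_one : T 1 = 1
  T_mul : ∀ u v : Equiv.Perm (Fin n), len (u * v) = len u + len v →
    T u * T v = T (u * v)
  T_sq : ∀ i : ℕ, i + 1 < n →
    T (adj n i) * T (adj n i) = Qv R q • T (adj n i) + 1

/-- The Young subgroup `S_I` of `S_n` associated with a composition `I` of `n`:
permutations preserving each block of the composition. -/
def youngSubgroup {n : ℕ} (c : Composition n) : Subgroup (Equiv.Perm (Fin n)) where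
  carrier := {w | ∀ i, c.index (w i) = c.index i}
  one_mem' := fun _ => rfl
  mul_mem' := by
    intro a b ha hb i
    have hb' := hb i
    have ha' := ha (b i)
    simpa [Equiv.Perm.mul_apply, hb'] using ha'
  inv_mem' := by
    intro a ha i
    have := ha (a⁻¹ i)
    simpa using this.symm

/-- `w` is the minimal-length representative of its coset `w·S_I`. -/
def IsMinCosetRep {n : ℕ} (c : Composition n) (w : Equiv.Perm (Fin n)) : Prop :=
  ∀ u ∈ youngSubgroup c, len w ≤ len (w * u)

/-- `w` is of maximal length in its coset `w·S_I`. -/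
def IsMaxCosetRep {n : ℕ} (c : Composition n) (w : Equiv.Perm (Fin n)) : Prop :=
  ∀ u ∈ youngSubgroup c, len (w * u) ≤ len w

/-- The set of minimal-length representatives of the cosets `S_n/S_I`. -/
def minCosetReps {n : ℕ} (c : Composition n) : Finset (Equiv.Perm (Fin n)) :=
  @Finset.filter _ (IsMinCosetRep c) (Classical.decPred _) Finset.univ

/-- The word `[a+m-2, …, a+1, a]` (so that the corresponding product of adjacent
transpositions is the block cyclic permutation `ζ_m` shifted by `a`). -/
def zetaWordBlock (a m : ℕ) : List ℕ := (List.range (m - 1)).reverse.map (a + ·)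

/-- The reduced word of the permutation `w_J` (whose Hecke element is `ζ_J`),
for a composition `J` of `n`. -/
def zetaWord {n : ℕ} (c : Composition n) : List ℕ :=
  (List.ofFn fun k : Fin c.length =>
    zetaWordBlock (c.sizeUpTo k) (c.blocksFun k)).flatten

/-- The permutation `w_J`, a minimal-length representative of the conjugacy
class corresponding to the composition `J`; `ζ_J = T_{w_J}`. -/
def zetaPerm {n : ℕ} (c : Composition n) : Equiv.Perm (Fin n) :=
  ((zetaWord c).map (adj n)).prod

/-- The composition of `n` obtained by sorting the parts of a partition of `n`
in decreasing order. -/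
def partComp {n : ℕ} (μ : n.Partition) : Composition n where
  blocks := μ.parts.sort (· ≥ ·)
  blocks_pos := by
    intro i hi
    exact μ.parts_pos (by rwa [Multiset.mem_sort] at hi)
  blocks_sum := by
    have h : ((μ.parts.sort (· ≥ ·) : List ℕ) : Multiset ℕ) = μ.parts :=
      Multiset.sort_eq _ _
    calc (μ.parts.sort (· ≥ ·)).sum
        = ((μ.parts.sort (· ≥ ·) : List ℕ) : Multiset ℕ).sum := by
          rw [Multiset.sum_coe]
      _ = μ.parts.sum := by rw [h]
      _ = n := μ.parts_sum

/-- `m` is a partial sum `j_1 + ⋯ + j_k` of the composition `J`. -/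
def IsPartialSum {n : ℕ} (c : Composition n) (m : ℕ) : Prop :=
  ∃ k ≤ c.length, c.sizeUpTo k = m

/-- `w` has a recoil at `a` (0-based; i.e. at `i = a+1` in the 1-based notation of
the paper): the value `a+1` occurs to the left of the value `a` in the one-line
word of `w`. -/
def Recoil {n : ℕ} (w : Equiv.Perm (Fin n)) (a : ℕ) : Prop :=
  ∀ h : a + 1 < n, w⁻¹ ⟨a + 1, h⟩ < w⁻¹ ⟨a, by omega⟩

namespace HeckeAlgebra

variable {n : ℕ} {R : Type} [CommRing R] {q : Rˣ} {H : Type} [Ring H] [Algebra R H]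
variable (𝒜 : HeckeAlgebra n R q H)

/-- The scalar product on `H_n` for which the basis `{T_w}` is orthonormal. -/
def scalar (x y : H) : R :=
  ∑ w : Equiv.Perm (Fin n), 𝒜.basis.repr x w * 𝒜.basis.repr y w

/-- The normalization map `N_I : H(S_I) → H_n`,
`h ↦ Σ_w T_w h T_{w⁻¹}` (sum over the minimal-length coset representatives of
`S_n/S_I`). -/
def norm (c : Composition n) (h : H) : H :=
  ∑ w ∈ minCosetReps c, 𝒜.T w * h * 𝒜.T w⁻¹

/-- The product `T_{a_1} T_{a_2} ⋯` in the Hecke algebra associated with a word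
(list of 0-based indices of the generators). -/
def wordT (l : List ℕ) : H := (l.map fun a => 𝒜.T (adj n a)).prod

/-- The Hecke element `ζ_J = T_{w_J}` of a composition `J`. -/
def zeta (c : Composition n) : H := 𝒜.T (zetaPerm c)

end HeckeAlgebra

-- ==== auxiliary lemmas ====

lemma adj_eq {n i : ℕ} (h : i + 1 < n) :
    adj n i = Equiv.swap ⟨i, by omega⟩ ⟨i + 1, h⟩ := by simp [adj, h]

lemma adj_inv {n i : ℕ} : (adj n i)⁻¹ = adj n i := by
  unfold adj; split <;> simp

lemma adj_mul_self {n i : ℕ} : adj n i * adj n i = 1 := by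
  unfold adj; split <;> simp

lemma len_one {n : ℕ} : len (1 : Equiv.Perm (Fin n)) = 0 := by
  simp only [len]
  rw [Finset.card_eq_zero, Finset.filter_eq_empty_iff]
  rintro ⟨p, q⟩ _ ⟨h1, h2⟩
  exact absurd h1 (not_lt.2 h2.le)

lemma len_inv {n : ℕ} (w : Equiv.Perm (Fin n)) : len w⁻¹ = len w := by
  classical
  unfold len
  apply Finset.card_bij' (fun p _ => (w⁻¹ p.2, w⁻¹ p.1)) (fun p _ => (w p.2, w p.1))
  · rintro ⟨p, q⟩ hp
    simp only [mem_filter, mem_univ, true_and] at hp ⊢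
    exact ⟨hp.2, by simpa using hp.1⟩
  · rintro ⟨p, q⟩ hp
    simp only [mem_filter, mem_univ, true_and] at hp ⊢
    refine ⟨hp.2, by simpa using hp.1⟩
  · rintro ⟨p, q⟩ _; simp
  · rintro ⟨p, q⟩ _; simp

lemma swap_adj_lt {n : ℕ} {a b : Fin n} (hab : (a : ℕ) + 1 = (b : ℕ)) {p q : Fin n}
    (hpq : p < q) (hne : ¬(p = a ∧ q = b)) : Equiv.swap a b p < Equiv.swap a b q := by
  rw [Fin.lt_def, Equiv.swap_apply_def, Equiv.swap_apply_def]
  rw [Fin.lt_def] at hpq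
  split_ifs <;> simp_all [Fin.ext_iff] <;> omega

lemma len_mul_adj_of_lt {n i : ℕ} (hi : i + 1 < n) (w : Equiv.Perm (Fin n))
    (hlt : w ⟨i, by omega⟩ < w ⟨i + 1, hi⟩) : len (w * adj n i) = len w + 1 := by
  classical
  set a : Fin n := ⟨i, by omega⟩ with ha
  set b : Fin n := ⟨i + 1, hi⟩ with hb
  have hab : (a : ℕ) + 1 = (b : ℕ) := rfl
  have hablt : a < b := by rw [Fin.lt_def]; omega
  rw [adj_eq hi, ← ha, ← hb]
  set σ := Equiv.swap a b with hσ
  have happ : ∀ x, (w * σ) x = w (σ x) := fun x => rfl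
  set S1 := Finset.univ.filter fun p : Fin n × Fin n => p.1 < p.2 ∧ (w * σ) p.2 < (w * σ) p.1
    with hS1
  set S2 := Finset.univ.filter fun p : Fin n × Fin n => p.1 < p.2 ∧ w p.2 < w p.1 with hS2
  have hmem1 : (a, b) ∈ S1 := by
    simp only [hS1, mem_filter, mem_univ, true_and]
    refine ⟨hablt, ?_⟩
    rw [happ, happ, Equiv.swap_apply_left, Equiv.swap_apply_right]
    exact hlt
  have hmem2 : (a, b) ∉ S2 := by
    simp only [hS2, mem_filter, mem_univ, true_and, not_and]
    intro _
    exact not_lt.2 hlt.le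
  have hcard : (S1.erase (a, b)).card = (S2.erase (a, b)).card := by
    apply Finset.card_bij' (fun p _ => (σ p.1, σ p.2)) (fun p _ => (σ p.1, σ p.2))
    · rintro ⟨p, q⟩ hp
      simp only [mem_erase, hS1, hS2, mem_filter, mem_univ, true_and] at hp ⊢
      obtain ⟨hne, h1, h2⟩ := hp
      have hne' : ¬(p = a ∧ q = b) := by rintro ⟨rfl, rfl⟩; exact hne rfl
      refine ⟨?_, swap_adj_lt hab h1 hne', by simpa [happ, hσ] using h2⟩
      rintro hpq
      have h1' : σ p = a := congrArg Prod.fst hpq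
      have h2' : σ q = b := congrArg Prod.snd hpq
      have hp' : p = σ a := by rw [← h1']; simp [hσ]
      have hq : q = σ b := by rw [← h2']; simp [hσ]
      rw [Equiv.swap_apply_left] at hp'
      rw [Equiv.swap_apply_right] at hq
      subst hp'; subst hq
      exact absurd h1 (not_lt.2 hablt.le)
    · rintro ⟨p, q⟩ hp
      simp only [mem_erase, hS1, hS2, mem_filter, mem_univ, true_and] at hp ⊢
      obtain ⟨hne, h1, h2⟩ := hp
      have hne' : ¬(p = a ∧ q = b) := by rintro ⟨rfl, rfl⟩; exact hne rfl
      refine ⟨?_, swap_adj_lt hab h1 hne', by simpa [happ, hσ] using h2⟩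
      rintro hpq
      have h1' : σ p = a := congrArg Prod.fst hpq
      have h2' : σ q = b := congrArg Prod.snd hpq
      have hp' : p = σ a := by rw [← h1']; simp [hσ]
      have hq : q = σ b := by rw [← h2']; simp [hσ]
      rw [Equiv.swap_apply_left] at hp'
      rw [Equiv.swap_apply_right] at hq
      subst hp'; subst hq
      exact absurd h1 (not_lt.2 hablt.le)
    · rintro ⟨p, q⟩ _; simp [hσ]
    · rintro ⟨p, q⟩ _; simp [hσ]
  have e1 : S1.card = (S1.erase (a, b)).card + 1 := by
    rw [Finset.card_erase_of_mem hmem1]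
    have : 0 < S1.card := Finset.card_pos.2 ⟨_, hmem1⟩
    omega
  have e2 : (S2.erase (a, b)).card = S2.card := by
    rw [Finset.erase_eq_of_notMem hmem2]
  show S1.card = S2.card + 1
  rw [e1, hcard, e2]

lemma len_mul_adj_of_gt {n i : ℕ} (hi : i + 1 < n) (w : Equiv.Perm (Fin n))
    (hgt : w ⟨i + 1, hi⟩ < w ⟨i, by omega⟩) : len (w * adj n i) + 1 = len w := by
  have h2 : (w * adj n i) * adj n i = w := by
    rw [mul_assoc, adj_mul_self, mul_one]
  have h3 := len_mul_adj_of_lt hi (w * adj n i) ?_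
  · rw [h2] at h3; omega
  · rw [adj_eq hi]
    show w (Equiv.swap _ _ _) < w (Equiv.swap _ _ _)
    rw [Equiv.swap_apply_left, Equiv.swap_apply_right]
    exact hgt

lemma len_adj {n i : ℕ} (hi : i + 1 < n) : len (adj n i) = 1 := by
  have h := len_mul_adj_of_lt hi 1 (by
    show (⟨i, by omega⟩ : Fin n) < ⟨i + 1, hi⟩
    rw [Fin.lt_def]; simp only [Fin.val_mk]; omega)
  rw [one_mul, len_one] at h
  exact h

lemma len_adj_mul_of_lt {n i : ℕ} (hi : i + 1 < n) (w : Equiv.Perm (Fin n))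
    (hlt : w⁻¹ ⟨i, by omega⟩ < w⁻¹ ⟨i + 1, hi⟩) : len (adj n i * w) = len w + 1 := by
  rw [← len_inv (adj n i * w), mul_inv_rev, adj_inv, len_mul_adj_of_lt hi w⁻¹ hlt, len_inv]

lemma len_adj_mul_of_gt {n i : ℕ} (hi : i + 1 < n) (w : Equiv.Perm (Fin n))
    (hgt : w⁻¹ ⟨i + 1, hi⟩ < w⁻¹ ⟨i, by omega⟩) : len (adj n i * w) + 1 = len w := by
  rw [← len_inv (adj n i * w), mul_inv_rev, adj_inv, len_mul_adj_of_gt hi w⁻¹ hgt, len_inv]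

lemma index_mono {n : ℕ} (c : Composition n) {x y : Fin n} (h : x ≤ y) :
    c.index x ≤ c.index y := by
  by_contra hc
  push_neg at hc
  have h1 : (y : ℕ) < c.sizeUpTo (c.index y + 1) := c.lt_sizeUpTo_index_succ y
  have h2 : c.sizeUpTo (c.index x) ≤ (x : ℕ) := c.sizeUpTo_index_le x
  have h3 : c.sizeUpTo (c.index y + 1) ≤ c.sizeUpTo (c.index x) :=
    c.monotone_sizeUpTo (by exact_mod_cast hc)
  have : (y : ℕ) < (x : ℕ) := lt_of_lt_of_le h1 (le_trans h3 h2)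
  exact absurd (Fin.le_def.1 h) (by omega)

lemma lt_of_index_lt {n : ℕ} (c : Composition n) {x y : Fin n}
    (h : c.index x < c.index y) : x < y := by
  by_contra hc
  push_neg at hc
  exact absurd (index_mono c hc) (not_le.2 h)

lemma adj_mem_young {n i : ℕ} (hi : i + 1 < n) (c : Composition n)
    (h : c.index ⟨i, by omega⟩ = c.index ⟨i + 1, hi⟩) : adj n i ∈ youngSubgroup c := by
  intro x
  rw [adj_eq hi]
  rcases eq_or_ne x ⟨i, by omega⟩ with rfl | h1
  · rw [Equiv.swap_apply_left]; exact h.symm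
  rcases eq_or_ne x ⟨i + 1, hi⟩ with rfl | h2
  · rw [Equiv.swap_apply_right]; exact h
  · rw [Equiv.swap_apply_of_ne_of_ne h1 h2]

/-- Block-increasing property. -/
def BI {n : ℕ} (c : Composition n) (w : Equiv.Perm (Fin n)) : Prop :=
  ∀ p q : Fin n, p < q → c.index p = c.index q → w p < w q

lemma exists_adj_descent {n : ℕ} (w : Equiv.Perm (Fin n)) (p q : Fin n) (hpq : p < q)
    (hle : w q ≤ w p) :
    ∃ k, ∃ hk : k + 1 < n, (p : ℕ) ≤ k ∧ k + 1 ≤ (q : ℕ) ∧ w ⟨k + 1, hk⟩ < w ⟨k, by omega⟩ := by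
  by_contra hno
  push_neg at hno
  have step : ∀ d : ℕ, ∀ _ : (p : ℕ) + d ≤ (q : ℕ),
      w p ≤ w ⟨(p : ℕ) + d, by have := q.2; omega⟩ := by
    intro d
    induction d with
    | zero => intro _; simp
    | succ m ih =>
      intro hd
      have hm : (p : ℕ) + m ≤ (q : ℕ) := by omega
      have h1 := ih hm
      have hk : (p : ℕ) + m + 1 < n := by have := q.2; omega
      have h2 := hno ((p : ℕ) + m) hk (by omega) (by omega)
      exact le_trans h1 h2
  have h3 := step ((q : ℕ) - (p : ℕ)) (by omega)
  have hq : (⟨(p : ℕ) + ((q : ℕ) - (p : ℕ)), by have := q.2; omega⟩ : Fin n) = q := by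
    apply Fin.ext
    simp only [Fin.val_mk]
    have := Fin.lt_def.1 hpq
    omega
  rw [hq] at h3
  have heq : p = q := w.injective (le_antisymm h3 hle)
  exact absurd heq (Fin.ne_of_lt hpq)

lemma bi_of_min {n : ℕ} (c : Composition n) (w : Equiv.Perm (Fin n))
    (hw : IsMinCosetRep c w) : BI c w := by
  intro p q hpq hidx
  by_contra hc
  push_neg at hc
  obtain ⟨k, hk, hpk, hkq, hdesc⟩ := exists_adj_descent w p q hpq hc
  have hkidx : c.index ⟨k, by omega⟩ = c.index ⟨k + 1, hk⟩ := by
    have l1 : c.index p ≤ c.index ⟨k, by omega⟩ :=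
      index_mono c (by rw [Fin.le_def]; simp only [Fin.val_mk]; omega)
    have l2 : c.index ⟨k, by omega⟩ ≤ c.index ⟨k + 1, hk⟩ :=
      index_mono c (by simp [Fin.le_def])
    have l3 : c.index ⟨k + 1, hk⟩ ≤ c.index q :=
      index_mono c (by rw [Fin.le_def]; simp only [Fin.val_mk]; omega)
    rw [← hidx] at l3
    exact le_antisymm l2 (le_trans l3 l1)
  have hu : adj n k ∈ youngSubgroup c := adj_mem_young hk c hkidx
  have h1 := hw (adj n k) hu
  have h2 := len_mul_adj_of_gt hk w hdesc
  omega

lemma min_of_bi {n : ℕ} (c : Composition n) (w : Equiv.Perm (Fin n))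
    (hw : BI c w) : IsMinCosetRep c w := by
  intro u hu
  have hu' : ∀ i, c.index (u⁻¹ i) = c.index i := (youngSubgroup c).inv_mem hu
  unfold len
  apply Finset.card_le_card_of_injOn (fun p => (u⁻¹ p.1, u⁻¹ p.2))
  · rintro ⟨p, q⟩ hp
    simp only [Finset.mem_coe, mem_filter, mem_univ, true_and] at hp ⊢
    obtain ⟨h1, h2⟩ := hp
    have hidx : c.index p < c.index q := by
      rcases lt_or_eq_of_le (index_mono c h1.le) with h | h
      · exact h
      · exact absurd (hw p q h1 h) (not_lt.2 h2.le)
    refine ⟨lt_of_index_lt c (by rw [hu' p, hu' q]; exact hidx), ?_⟩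
    show w (u (u⁻¹ q)) < w (u (u⁻¹ p))
    simpa using h2
  · rintro ⟨p, q⟩ _ ⟨p', q'⟩ _ hh
    have h1 : u⁻¹ p = u⁻¹ p' := congrArg Prod.fst hh
    have h2 : u⁻¹ q = u⁻¹ q' := congrArg Prod.snd hh
    exact Prod.ext (u⁻¹.injective h1) (u⁻¹.injective h2)

lemma mem_minCosetReps {n : ℕ} (c : Composition n) (w : Equiv.Perm (Fin n)) :
    w ∈ minCosetReps c ↔ IsMinCosetRep c w := by
  have := @Finset.mem_filter _ (IsMinCosetRep c) (Classical.decPred _) Finset.univ w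
  rw [minCosetReps, this]
  simp

lemma bi_adj_mul {n i : ℕ} (hi : i + 1 < n) (c : Composition n) (w : Equiv.Perm (Fin n))
    (hw : BI c w) (hgt : w⁻¹ ⟨i + 1, hi⟩ < w⁻¹ ⟨i, by omega⟩) : BI c (adj n i * w) := by
  intro p q hpq hidx
  have h1 := hw p q hpq hidx
  show adj n i (w p) < adj n i (w q)
  rw [adj_eq hi]
  apply swap_adj_lt rfl h1
  rintro ⟨hwp, hwq⟩
  have hp : p = w⁻¹ ⟨i, by omega⟩ := by rw [← hwp]; simp
  have hq : q = w⁻¹ ⟨i + 1, hi⟩ := by rw [← hwq]; simp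
  rw [hp, hq] at hpq
  exact absurd hpq (not_lt.2 hgt.le)

lemma deodhar {n i : ℕ} (hi : i + 1 < n) (c : Composition n) (w : Equiv.Perm (Fin n))
    (hbw : BI c w) (hnb : ¬ BI c (adj n i * w)) :
    ∃ j, ∃ hj : j + 1 < n, adj n j ∈ youngSubgroup c ∧
      adj n i * w = w * adj n j ∧
      w ⟨j, by omega⟩ = ⟨i, by omega⟩ ∧ w ⟨j + 1, hj⟩ = ⟨i + 1, hi⟩ := by
  unfold BI at hnb
  push_neg at hnb
  obtain ⟨p, q, hpq, hidx, hnlt⟩ := hnb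
  have hwpq := hbw p q hpq hidx
  set a : Fin n := ⟨i, by omega⟩ with ha
  set b : Fin n := ⟨i + 1, hi⟩ with hb
  have hkey : w p = a ∧ w q = b := by
    by_contra hno
    have hcon : (adj n i * w) p < (adj n i * w) q := by
      show adj n i (w p) < adj n i (w q)
      rw [adj_eq hi]
      exact swap_adj_lt rfl hwpq hno
    exact absurd hcon (not_lt.2 hnlt)
  obtain ⟨hwp, hwq⟩ := hkey
  have hq1 : (q : ℕ) = (p : ℕ) + 1 := by
    by_contra hq1
    have hlt : (p : ℕ) + 1 < (q : ℕ) := by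
      have := Fin.lt_def.1 hpq; omega
    set r : Fin n := ⟨(p : ℕ) + 1, by have := q.2; omega⟩ with hr
    have hidxr : c.index p = c.index r := by
      have l1 : c.index p ≤ c.index r :=
        index_mono c (by rw [Fin.le_def]; simp only [hr, Fin.val_mk]; omega)
      have l2 : c.index r ≤ c.index q :=
        index_mono c (by rw [Fin.le_def]; simp only [hr, Fin.val_mk]; omega)
      rw [← hidx] at l2
      exact le_antisymm l1 l2
    have h1 := hbw p r (by rw [Fin.lt_def]; simp only [hr, Fin.val_mk]; omega) hidxr
    have h2 := hbw r q (by rw [Fin.lt_def]; simp only [hr, Fin.val_mk]; omega)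
      (by rw [← hidxr]; exact hidx)
    rw [hwp] at h1
    rw [hwq] at h2
    rw [Fin.lt_def] at h1 h2
    have e1 : (a : ℕ) = i := rfl
    have e2 : (b : ℕ) = i + 1 := rfl
    omega
  have hj : (p : ℕ) + 1 < n := by have := q.2; omega
  have e1 : (⟨(p : ℕ), by omega⟩ : Fin n) = p := by apply Fin.ext; rfl
  have e2 : (⟨(p : ℕ) + 1, hj⟩ : Fin n) = q := by
    apply Fin.ext; simp only [Fin.val_mk]; omega
  refine ⟨(p : ℕ), hj, ?_, ?_, ?_, ?_⟩
  · apply adj_mem_young hj c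
    rw [e1, e2]
    exact hidx
  · apply Equiv.ext
    intro x
    show adj n i (w x) = w (adj n (p : ℕ) x)
    rw [adj_eq hi, adj_eq hj]
    rw [e1, e2]
    rcases eq_or_ne x p with rfl | hx1
    · rw [Equiv.swap_apply_left, hwp, hwq, Equiv.swap_apply_left]
    rcases eq_or_ne x q with rfl | hx2
    · rw [Equiv.swap_apply_right, hwp, hwq, Equiv.swap_apply_right]
    · rw [Equiv.swap_apply_of_ne_of_ne hx1 hx2]
      rw [Equiv.swap_apply_of_ne_of_ne]
      · intro hcon; exact hx1 (w.injective (by rw [hcon, hwp]))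
      · intro hcon; exact hx2 (w.injective (by rw [hcon, hwq]))
  · rw [e1]; exact hwp
  · rw [e2]; exact hwq

section Hecke
variable {n : ℕ} {R : Type} [CommRing R] {q : Rˣ} {H : Type} [Ring H] [Algebra R H]
variable (𝒜 : HeckeAlgebra n R q H)

lemma T_mul_adj_of_lt {i : ℕ} (hi : i + 1 < n) (w : Equiv.Perm (Fin n))
    (hlt : w ⟨i, by omega⟩ < w ⟨i + 1, hi⟩) :
    𝒜.T w * 𝒜.T (adj n i) = 𝒜.T (w * adj n i) :=
  𝒜.T_mul w (adj n i) (by rw [len_adj hi, len_mul_adj_of_lt hi w hlt])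

lemma T_adj_mul_of_lt {i : ℕ} (hi : i + 1 < n) (w : Equiv.Perm (Fin n))
    (hlt : w⁻¹ ⟨i, by omega⟩ < w⁻¹ ⟨i + 1, hi⟩) :
    𝒜.T (adj n i) * 𝒜.T w = 𝒜.T (adj n i * w) :=
  𝒜.T_mul (adj n i) w (by rw [len_adj hi, len_adj_mul_of_lt hi w hlt, add_comm])

lemma f_eq_g {i : ℕ} (hi : i + 1 < n) (h : H) (w : Equiv.Perm (Fin n)) :
    𝒜.T (adj n i) * (𝒜.T w * h * 𝒜.T w⁻¹) - 𝒜.T w * h * 𝒜.T w⁻¹ * 𝒜.T (adj n i)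
      = 𝒜.T (adj n i * w) * h * 𝒜.T w⁻¹ - 𝒜.T w * h * 𝒜.T (adj n i * w)⁻¹ := by
  set a : Fin n := ⟨i, by omega⟩ with ha
  set b : Fin n := ⟨i + 1, hi⟩ with hb
  have hab : a ≠ b := by rw [ha, hb, Fin.ne_iff_vne]; simp
  have hinv : (adj n i * w)⁻¹ = w⁻¹ * adj n i := by rw [mul_inv_rev, adj_inv]
  rcases lt_trichotomy (w⁻¹ a) (w⁻¹ b) with hcase | hcase | hcase
  · -- ascent
    have e1 : 𝒜.T (adj n i) * 𝒜.T w = 𝒜.T (adj n i * w) := T_adj_mul_of_lt 𝒜 hi w hcase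
    have e2 : 𝒜.T w⁻¹ * 𝒜.T (adj n i) = 𝒜.T (w⁻¹ * adj n i) := by
      apply T_mul_adj_of_lt 𝒜 hi w⁻¹
      simpa using hcase
    rw [hinv, ← e2, ← e1]
    simp only [mul_assoc]
  · exact absurd (w⁻¹.injective hcase) hab
  · -- descent
    set v := adj n i * w with hv
    have hvw : adj n i * v = w := by rw [hv, ← mul_assoc, adj_mul_self, one_mul]
    have hvinv : v⁻¹ = w⁻¹ * adj n i := by rw [hv, mul_inv_rev, adj_inv]
    have hva : v⁻¹ a = w⁻¹ b := by
      rw [hvinv]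
      show w⁻¹ (adj n i a) = w⁻¹ b
      rw [adj_eq hi]
      rw [show Equiv.swap a b a = b from Equiv.swap_apply_left a b]
    have hvb : v⁻¹ b = w⁻¹ a := by
      rw [hvinv]
      show w⁻¹ (adj n i b) = w⁻¹ a
      rw [adj_eq hi]
      rw [show Equiv.swap a b b = a from Equiv.swap_apply_right a b]
    have hvcase : v⁻¹ a < v⁻¹ b := by rw [hva, hvb]; exact hcase
    have e1 : 𝒜.T (adj n i) * 𝒜.T v = 𝒜.T w := by
      rw [T_adj_mul_of_lt 𝒜 hi v hvcase, hvw]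
    have e2 : 𝒜.T v⁻¹ * 𝒜.T (adj n i) = 𝒜.T w⁻¹ := by
      rw [T_mul_adj_of_lt 𝒜 hi v⁻¹ (by simpa using hvcase)]
      congr 1
      rw [hvinv, mul_assoc, adj_mul_self, mul_one]
    have hsq := 𝒜.T_sq i hi
    have f1 : 𝒜.T (adj n i) * 𝒜.T w = Qv R q • 𝒜.T w + 𝒜.T v := by
      rw [← e1, ← mul_assoc, hsq, add_mul, smul_mul_assoc, one_mul, e1]
    have f2 : 𝒜.T w⁻¹ * 𝒜.T (adj n i) = Qv R q • 𝒜.T w⁻¹ + 𝒜.T v⁻¹ := by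
      rw [← e2, mul_assoc, hsq, mul_add, mul_smul_comm, mul_one, e2]
    calc 𝒜.T (adj n i) * (𝒜.T w * h * 𝒜.T w⁻¹) - 𝒜.T w * h * 𝒜.T w⁻¹ * 𝒜.T (adj n i)
        = (𝒜.T (adj n i) * 𝒜.T w) * h * 𝒜.T w⁻¹
            - 𝒜.T w * h * (𝒜.T w⁻¹ * 𝒜.T (adj n i)) := by
          simp only [mul_assoc]
      _ = (Qv R q • 𝒜.T w + 𝒜.T v) * h * 𝒜.T w⁻¹
            - 𝒜.T w * h * (Qv R q • 𝒜.T w⁻¹ + 𝒜.T v⁻¹) := by rw [f1, f2]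
      _ = 𝒜.T v * h * 𝒜.T w⁻¹ - 𝒜.T w * h * 𝒜.T v⁻¹ := by
          simp only [add_mul, mul_add, smul_mul_assoc, mul_smul_comm]
          abel

end Hecke

section Hecke2
variable {n : ℕ} {R : Type} [CommRing R] {q : Rˣ} {H : Type} [Ring H] [Algebra R H]
variable (𝒜 : HeckeAlgebra n R q H)

lemma norm_comm_adj (c : Composition n) (h : H)
    (hcent : ∀ u ∈ youngSubgroup c, h * 𝒜.T u = 𝒜.T u * h)
    {i : ℕ} (hi : i + 1 < n) :
    𝒜.T (adj n i) * 𝒜.norm c h = 𝒜.norm c h * 𝒜.T (adj n i) := by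
  classical
  set a : Fin n := ⟨i, by omega⟩ with ha
  set b : Fin n := ⟨i + 1, hi⟩ with hb
  have hab : a ≠ b := by rw [ha, hb, Fin.ne_iff_vne]; simp
  rw [HeckeAlgebra.norm, Finset.mul_sum, Finset.sum_mul, ← sub_eq_zero,
    ← Finset.sum_sub_distrib]
  have hfg := f_eq_g 𝒜 hi h
  rw [Finset.sum_congr rfl (fun w _ => hfg w)]
  set D := minCosetReps c with hD
  set g : Equiv.Perm (Fin n) → H := fun w =>
    𝒜.T (adj n i * w) * h * 𝒜.T w⁻¹ - 𝒜.T w * h * 𝒜.T (adj n i * w)⁻¹ with hg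
  show ∑ w ∈ D, g w = 0
  rw [← Finset.sum_filter_add_sum_filter_not D (fun w => adj n i * w ∈ D)]
  have hssw : ∀ w : Equiv.Perm (Fin n), adj n i * (adj n i * w) = w := by
    intro w; rw [← mul_assoc, adj_mul_self, one_mul]
  have part1 : ∑ w ∈ D.filter (fun w => adj n i * w ∈ D), g w = 0 := by
    apply Finset.sum_involution (fun w _ => adj n i * w)
    · intro w hw
      rw [hg]
      simp only [hssw w]
      abel
    · intro w hw hne heq
      apply hne
      rw [hg]
      simp only [heq]
      abel
    · intro w hw
      rw [Finset.mem_filter] at hw ⊢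
      refine ⟨hw.2, ?_⟩
      rw [hssw w]
      exact hw.1
    · intro w hw
      exact hssw w
  have part2 : ∑ w ∈ D.filter (fun w => ¬ adj n i * w ∈ D), g w = 0 := by
    apply Finset.sum_eq_zero
    intro w hw
    rw [Finset.mem_filter] at hw
    obtain ⟨hwD, hswD⟩ := hw
    have hwmin : IsMinCosetRep c w := (mem_minCosetReps c w).1 hwD
    have hbw : BI c w := bi_of_min c w hwmin
    -- the left multiplication must be an ascent
    have hasc : w⁻¹ a < w⁻¹ b := by
      rcases lt_trichotomy (w⁻¹ a) (w⁻¹ b) with hcase | hcase | hcase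
      · exact hcase
      · exact absurd (w⁻¹.injective hcase) hab
      · exfalso
        apply hswD
        rw [hD, mem_minCosetReps]
        exact min_of_bi c _ (bi_adj_mul hi c w hbw hcase)
    have hnb : ¬ BI c (adj n i * w) := by
      intro hbsw
      apply hswD
      rw [hD, mem_minCosetReps]
      exact min_of_bi c _ hbsw
    obtain ⟨j, hj, hmem, heq, hwj, hwj1⟩ := deodhar hi c w hbw hnb
    have hwjlt : w ⟨j, by omega⟩ < w ⟨j + 1, hj⟩ := by
      rw [hwj, hwj1]
      rw [Fin.lt_def]; simp
    have e1 : 𝒜.T (adj n i * w) = 𝒜.T w * 𝒜.T (adj n j) := by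
      rw [heq, T_mul_adj_of_lt 𝒜 hj w hwjlt]
    have e0 : adj n j * w⁻¹ = w⁻¹ * adj n i := by
      have h' := congrArg Inv.inv heq
      rw [mul_inv_rev, mul_inv_rev, adj_inv, adj_inv] at h'
      exact h'.symm
    have e3 : 𝒜.T w⁻¹ * 𝒜.T (adj n i) = 𝒜.T (w⁻¹ * adj n i) :=
      T_mul_adj_of_lt 𝒜 hi w⁻¹ (by simpa using hasc)
    have e2 : 𝒜.T (adj n j) * 𝒜.T w⁻¹ = 𝒜.T w⁻¹ * 𝒜.T (adj n i) := by
      rw [e3]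
      rw [𝒜.T_mul (adj n j) w⁻¹ ?hlen]
      · rw [e0]
      case hlen =>
        rw [e0, len_adj hj, len_mul_adj_of_lt hi w⁻¹ (by simpa using hasc), len_inv,
          add_comm]
    have e4 : 𝒜.T (adj n i * w)⁻¹ = 𝒜.T w⁻¹ * 𝒜.T (adj n i) := by
      rw [mul_inv_rev, adj_inv, e3]
    have hth : h * 𝒜.T (adj n j) = 𝒜.T (adj n j) * h := hcent _ hmem
    rw [hg]
    simp only [e1, e4]
    calc 𝒜.T w * 𝒜.T (adj n j) * h * 𝒜.T w⁻¹
          - 𝒜.T w * h * (𝒜.T w⁻¹ * 𝒜.T (adj n i))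
        = 𝒜.T w * (𝒜.T (adj n j) * h) * 𝒜.T w⁻¹
          - 𝒜.T w * h * (𝒜.T w⁻¹ * 𝒜.T (adj n i)) := by simp only [mul_assoc]
      _ = 𝒜.T w * h * (𝒜.T (adj n j) * 𝒜.T w⁻¹)
          - 𝒜.T w * h * (𝒜.T w⁻¹ * 𝒜.T (adj n i)) := by
            rw [← hth]; simp only [mul_assoc]
      _ = 0 := by rw [e2, sub_self]
  rw [part1, part2, add_zero]

lemma eq_one_of_no_descent {n : ℕ} (w : Equiv.Perm (Fin n))
    (hnd : ∀ k, ∀ hk : k + 1 < n, ¬ w ⟨k + 1, hk⟩ < w ⟨k, by omega⟩) : w = 1 := by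
  have hsm : StrictMono w := by
    intro p q hpq
    by_contra hle
    push_neg at hle
    obtain ⟨k, hk, _, _, hdesc⟩ := exists_adj_descent w p q hpq hle
    exact hnd k hk hdesc
  have hrange : Set.range w = Set.range (id : Fin n → Fin n) := by
    rw [Set.range_id, w.surjective.range_eq]
  haveI : WellFoundedLT (Fin n) := inferInstance
  have hfun : (w : Fin n → Fin n) = id :=
    (StrictMono.range_inj (β := Fin n) (γ := Fin n) hsm
      (strictMono_id : StrictMono (id : Fin n → Fin n))).1 hrange
  apply Equiv.ext
  intro x
  exact congrFun hfun x

lemma commute_T (z : H)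
    (hz : ∀ i : ℕ, ∀ _ : i + 1 < n, z * 𝒜.T (adj n i) = 𝒜.T (adj n i) * z) :
    ∀ w : Equiv.Perm (Fin n), z * 𝒜.T w = 𝒜.T w * z := by
  have key : ∀ m : ℕ, ∀ w : Equiv.Perm (Fin n), len w ≤ m → z * 𝒜.T w = 𝒜.T w * z := by
    intro m
    induction m with
    | zero =>
      intro w hw
      have hnd : ∀ k, ∀ hk : k + 1 < n, ¬ w ⟨k + 1, hk⟩ < w ⟨k, by omega⟩ := by
        intro k hk hdesc
        have := len_mul_adj_of_gt hk w hdesc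
        omega
      rw [eq_one_of_no_descent w hnd, 𝒜.T_one, mul_one, one_mul]
    | succ m ih =>
      intro w hw
      by_cases hd : ∃ k, ∃ hk : k + 1 < n, w ⟨k + 1, hk⟩ < w ⟨k, by omega⟩
      · obtain ⟨k, hk, hdesc⟩ := hd
        set v := w * adj n k with hv
        have hlen := len_mul_adj_of_gt hk w hdesc
        rw [← hv] at hlen
        have hvw : v * adj n k = w := by rw [hv, mul_assoc, adj_mul_self, mul_one]
        have hvcond : v ⟨k, by omega⟩ < v ⟨k + 1, hk⟩ := by
          rw [hv]
          show w (adj n k _) < w (adj n k _)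
          rw [adj_eq hk, Equiv.swap_apply_left, Equiv.swap_apply_right]
          exact hdesc
        have hTv : 𝒜.T v * 𝒜.T (adj n k) = 𝒜.T w := by
          rw [T_mul_adj_of_lt 𝒜 hk v hvcond, hvw]
        have ihv := ih v (by omega)
        calc z * 𝒜.T w = z * (𝒜.T v * 𝒜.T (adj n k)) := by rw [hTv]
          _ = (z * 𝒜.T v) * 𝒜.T (adj n k) := by rw [mul_assoc]
          _ = (𝒜.T v * z) * 𝒜.T (adj n k) := by rw [ihv]
          _ = 𝒜.T v * (z * 𝒜.T (adj n k)) := by rw [mul_assoc]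
          _ = 𝒜.T v * (𝒜.T (adj n k) * z) := by rw [hz k hk]
          _ = 𝒜.T w * z := by rw [← mul_assoc, hTv]
      · push_neg at hd
        rw [eq_one_of_no_descent w (fun k hk => not_lt.2 (hd k hk)), 𝒜.T_one, mul_one,
          one_mul]
  exact fun w => key (len w) w le_rfl

lemma commute_all (z : H)
    (hz : ∀ i : ℕ, ∀ _ : i + 1 < n, z * 𝒜.T (adj n i) = 𝒜.T (adj n i) * z) :
    ∀ x : H, z * x = x * z := by
  intro x
  have hx : x ∈ Submodule.span R (Set.range 𝒜.basis) := Module.Basis.mem_span 𝒜.basis x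
  induction hx using Submodule.span_induction with
  | mem y hy =>
    obtain ⟨w, rfl⟩ := hy
    rw [𝒜.basis_eq]
    exact commute_T 𝒜 z hz w
  | zero => rw [mul_zero, zero_mul]
  | add u v hu hv ihu ihv => rw [mul_add, add_mul, ihu, ihv]
  | smul r u hu ihu => rw [mul_smul_comm, smul_mul_assoc, ihu]

end Hecke2



/-- If `h` is a central element of the Hecke algebra `H(S_I)` of the
Young subgroup `S_I`, then the normalized element
`N_I(h) = Σ_w T_w · h · T_{w⁻¹}` (sum over the minimal-length coset
representatives of `S_n/S_I`) is central in `H_n`. -/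
theorem norm_central {n : ℕ} {R : Type} [CommRing R] {q : Rˣ} {H : Type}
    [Ring H] [Algebra R H] (𝒜 : HeckeAlgebra n R q H) (c : Composition n) (h : H)
    (hmem : h ∈ Submodule.span R (𝒜.T '' (youngSubgroup c : Set (Equiv.Perm (Fin n)))))
    (hcent : ∀ u ∈ youngSubgroup c, h * 𝒜.T u = 𝒜.T u * h) :
    ∀ x : H, 𝒜.norm c h * x = x * 𝒜.norm c h := by
  intro x
  exact commute_all 𝒜 (𝒜.norm c h) (fun i hi => (norm_comm_adj 𝒜 c h hcent hi).symm) x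
end
end HeckePaper
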